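/- Let W = {(x,y) ∈ ℝ² : √2·|sinh(√2·y)| < 2 cosh(√2·x) − √2·sinh(√2·x)}. Then the function w : W → ℝ defined by w(x,y) = 2 arctanh( √2·sinh(√2·y) / (√2·sinh(√2·x) − 2 cosh(√2·x)) ) satisfies the elliptic sinh-Gordon equation Δw = 2 sinh(2w) on W. -/

import Mathlib

/-- First partial derivative (in the x-direction) of a function on ℝ². -/
noncomputable def pdx (f : ℝ × ℝ → ℝ) (p : ℝ × ℝ) : ℝ := fderiv ℝ f p (1, 0)

/-- Second partial derivative (in the y-direction) of a function on ℝ². -/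
noncomputable def pdy (f : ℝ × ℝ → ℝ) (p : ℝ × ℝ) : ℝ := fderiv ℝ f p (0, 1)

/-- Laplacian of a function on ℝ². -/
noncomputable def lap (f : ℝ × ℝ → ℝ) (p : ℝ × ℝ) : ℝ := pdx (pdx f) p + pdy (pdy f) p

/-- The inverse hyperbolic tangent, defined on (−1,1). -/
noncomputable def artanh (x : ℝ) : ℝ := (1 / 2) * Real.log ((1 + x) / (1 - x))

noncomputable def AA (x : ℝ) : ℝ :=
  Real.sqrt 2 * Real.sinh (Real.sqrt 2 * x) - 2 * Real.cosh (Real.sqrt 2 * x)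
noncomputable def AA1 (x : ℝ) : ℝ :=
  2 * Real.cosh (Real.sqrt 2 * x) - 2 * Real.sqrt 2 * Real.sinh (Real.sqrt 2 * x)
noncomputable def BB (y : ℝ) : ℝ := Real.sqrt 2 * Real.sinh (Real.sqrt 2 * y)
noncomputable def BB1 (y : ℝ) : ℝ := 2 * Real.cosh (Real.sqrt 2 * y)

lemma sq2 : Real.sqrt 2 * Real.sqrt 2 = 2 := Real.mul_self_sqrt (by norm_num)

lemma hsinh (x : ℝ) : HasDerivAt (fun t => Real.sinh (Real.sqrt 2 * t))
    (Real.sqrt 2 * Real.cosh (Real.sqrt 2 * x)) x := by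
  have h := (((hasDerivAt_id x).const_mul (Real.sqrt 2)).sinh)
  simpa [mul_comm] using h

lemma hcosh (x : ℝ) : HasDerivAt (fun t => Real.cosh (Real.sqrt 2 * t))
    (Real.sqrt 2 * Real.sinh (Real.sqrt 2 * x)) x := by
  have h := (((hasDerivAt_id x).const_mul (Real.sqrt 2)).cosh)
  simpa [mul_comm] using h

lemma hAA (x : ℝ) : HasDerivAt AA (AA1 x) x := by
  have h := ((hsinh x).const_mul (Real.sqrt 2)).sub ((hcosh x).const_mul 2)
  have e : Real.sqrt 2 * (Real.sqrt 2 * Real.cosh (Real.sqrt 2 * x)) -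
      2 * (Real.sqrt 2 * Real.sinh (Real.sqrt 2 * x)) = AA1 x := by
    rw [← mul_assoc, sq2]; unfold AA1; ring
  rw [e] at h; exact h

lemma hAA1 (x : ℝ) : HasDerivAt AA1 (2 * AA x) x := by
  have h := ((hcosh x).const_mul 2).sub ((hsinh x).const_mul (2 * Real.sqrt 2))
  have e : 2 * (Real.sqrt 2 * Real.sinh (Real.sqrt 2 * x)) -
      2 * Real.sqrt 2 * (Real.sqrt 2 * Real.cosh (Real.sqrt 2 * x)) = 2 * AA x := by
    have : 2 * Real.sqrt 2 * (Real.sqrt 2 * Real.cosh (Real.sqrt 2 * x)) =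
        4 * Real.cosh (Real.sqrt 2 * x) := by
      rw [mul_assoc, ← mul_assoc (Real.sqrt 2), sq2]; ring
    rw [this]; unfold AA; ring
  rw [e] at h; exact h

lemma hBB (y : ℝ) : HasDerivAt BB (BB1 y) y := by
  have h := (hsinh y).const_mul (Real.sqrt 2)
  have e : Real.sqrt 2 * (Real.sqrt 2 * Real.cosh (Real.sqrt 2 * y)) = BB1 y := by
    rw [← mul_assoc, sq2]; rfl
  rw [e] at h; exact h

lemma hBB1 (y : ℝ) : HasDerivAt BB1 (2 * BB y) y := by
  have h := (hcosh y).const_mul 2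
  have e : 2 * (Real.sqrt 2 * Real.sinh (Real.sqrt 2 * y)) = 2 * BB y := by
    unfold BB; ring
  rw [e] at h; exact h

lemma idAA (x : ℝ) : AA1 x ^ 2 = 2 * AA x ^ 2 - 4 := by
  unfold AA AA1
  have h := Real.cosh_sq_sub_sinh_sq (Real.sqrt 2 * x)
  nlinarith [sq2]

lemma idBB (y : ℝ) : BB1 y ^ 2 = 2 * BB y ^ 2 + 4 := by
  unfold BB BB1
  have h := Real.cosh_sq_sub_sinh_sq (Real.sqrt 2 * y)
  nlinarith [sq2]

open ContinuousLinearMap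

lemma hS (p : ℝ × ℝ) :
    HasFDerivAt (fun q : ℝ × ℝ => AA q.1 + BB q.2)
      (AA1 p.1 • fst ℝ ℝ ℝ + BB1 p.2 • snd ℝ ℝ ℝ) p :=
  ((hAA p.1).comp_hasFDerivAt p hasFDerivAt_fst).add
    ((hBB p.2).comp_hasFDerivAt p hasFDerivAt_snd)

lemma hD (p : ℝ × ℝ) :
    HasFDerivAt (fun q : ℝ × ℝ => AA q.1 - BB q.2)
      (AA1 p.1 • fst ℝ ℝ ℝ - BB1 p.2 • snd ℝ ℝ ℝ) p :=
  ((hAA p.1).comp_hasFDerivAt p hasFDerivAt_fst).sub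
    ((hBB p.2).comp_hasFDerivAt p hasFDerivAt_snd)

lemma pdxF (p : ℝ × ℝ) (hs : AA p.1 + BB p.2 ≠ 0) (hd : AA p.1 - BB p.2 ≠ 0) :
    fderiv ℝ (fun q : ℝ × ℝ => Real.log (AA q.1 + BB q.2) - Real.log (AA q.1 - BB q.2)) p (1, 0)
      = AA1 p.1 * ((AA p.1 + BB p.2)⁻¹ - (AA p.1 - BB p.2)⁻¹) := by
  have h := (((hS p).log hs).sub ((hD p).log hd))
  rw [(show HasFDerivAt (fun q : ℝ × ℝ => Real.log (AA q.1 + BB q.2) - Real.log (AA q.1 - BB q.2)) _ p from h).fderiv]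
  simp
  ring

lemma pdyF (p : ℝ × ℝ) (hs : AA p.1 + BB p.2 ≠ 0) (hd : AA p.1 - BB p.2 ≠ 0) :
    fderiv ℝ (fun q : ℝ × ℝ => Real.log (AA q.1 + BB q.2) - Real.log (AA q.1 - BB q.2)) p (0, 1)
      = BB1 p.2 * ((AA p.1 + BB p.2)⁻¹ + (AA p.1 - BB p.2)⁻¹) := by
  have h := (((hS p).log hs).sub ((hD p).log hd))
  rw [(show HasFDerivAt (fun q : ℝ × ℝ => Real.log (AA q.1 + BB q.2) - Real.log (AA q.1 - BB q.2)) _ p from h).fderiv]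
  simp
  ring

lemma pdxG (p : ℝ × ℝ) (hs : AA p.1 + BB p.2 ≠ 0) (hd : AA p.1 - BB p.2 ≠ 0) :
    fderiv ℝ (fun q : ℝ × ℝ => AA1 q.1 * ((AA q.1 + BB q.2)⁻¹ - (AA q.1 - BB q.2)⁻¹)) p (1, 0)
      = 2 * AA p.1 * ((AA p.1 + BB p.2)⁻¹ - (AA p.1 - BB p.2)⁻¹)
        + AA1 p.1 * AA1 p.1 * (((AA p.1 - BB p.2)^2)⁻¹ - ((AA p.1 + BB p.2)^2)⁻¹) := by
  have hsi := (hasDerivAt_inv hs).comp_hasFDerivAt p (hS p)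
  have hdi := (hasDerivAt_inv hd).comp_hasFDerivAt p (hD p)
  have h := ((hAA1 p.1).comp_hasFDerivAt p hasFDerivAt_fst).mul (hsi.sub hdi)
  simp only [Function.comp_def] at h
  rw [(show HasFDerivAt (fun q : ℝ × ℝ => AA1 q.1 * ((AA q.1 + BB q.2)⁻¹ - (AA q.1 - BB q.2)⁻¹)) _ p from h).fderiv]
  simp [Function.comp]
  ring

lemma pdyH (p : ℝ × ℝ) (hs : AA p.1 + BB p.2 ≠ 0) (hd : AA p.1 - BB p.2 ≠ 0) :
    fderiv ℝ (fun q : ℝ × ℝ => BB1 q.2 * ((AA q.1 + BB q.2)⁻¹ + (AA q.1 - BB q.2)⁻¹)) p (0, 1)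
      = 2 * BB p.2 * ((AA p.1 + BB p.2)⁻¹ + (AA p.1 - BB p.2)⁻¹)
        + BB1 p.2 * BB1 p.2 * (((AA p.1 - BB p.2)^2)⁻¹ - ((AA p.1 + BB p.2)^2)⁻¹) := by
  have hsi := (hasDerivAt_inv hs).comp_hasFDerivAt p (hS p)
  have hdi := (hasDerivAt_inv hd).comp_hasFDerivAt p (hD p)
  have h := ((hBB1 p.2).comp_hasFDerivAt p hasFDerivAt_snd).mul (hsi.add hdi)
  simp only [Function.comp_def] at h
  rw [(show HasFDerivAt (fun q : ℝ × ℝ => BB1 q.2 * ((AA q.1 + BB q.2)⁻¹ + (AA q.1 - BB q.2)⁻¹)) _ p from h).fderiv]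
  simp [Function.comp]
  ring

lemma key (a b a1 b1 : ℝ) (ha : a1^2 = 2*a^2-4) (hb : b1^2 = 2*b^2+4)
    (hS : a+b ≠ 0) (hD : a-b ≠ 0) :
    (2*a*((a+b)⁻¹-(a-b)⁻¹) + a1*a1*(((a-b)^2)⁻¹-((a+b)^2)⁻¹))
    + (2*b*((a+b)⁻¹+(a-b)⁻¹) + b1*b1*(((a-b)^2)⁻¹-((a+b)^2)⁻¹))
    = 2*((((a+b)/(a-b))^2 - (((a+b)/(a-b))^2)⁻¹)/2) := by
  have ha' : a1*a1 = 2*a^2-4 := by nlinarith [ha]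
  have hb' : b1*b1 = 2*b^2+4 := by nlinarith [hb]
  rw [ha', hb']
  field_simp
  ring

theorem stmt_18 (W : Set (ℝ × ℝ))
    (hW : W = {p : ℝ × ℝ | Real.sqrt 2 * |Real.sinh (Real.sqrt 2 * p.2)| <
      2 * Real.cosh (Real.sqrt 2 * p.1) - Real.sqrt 2 * Real.sinh (Real.sqrt 2 * p.1)})
    (w : ℝ × ℝ → ℝ)
    (hw : ∀ p : ℝ × ℝ, w p = 2 * artanh
      (Real.sqrt 2 * Real.sinh (Real.sqrt 2 * p.2) /
       (Real.sqrt 2 * Real.sinh (Real.sqrt 2 * p.1) - 2 * Real.cosh (Real.sqrt 2 * p.1)))) :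
    ∀ p ∈ W, lap w p = 2 * Real.sinh (2 * w p) := by
  have hWo : IsOpen W := by
    rw [hW]
    exact isOpen_lt (by continuity) (by continuity)
  have hmem : ∀ q ∈ W, AA q.1 + BB q.2 < 0 ∧ AA q.1 - BB q.2 < 0 := by
    intro q hq
    rw [hW] at hq
    have h1 : Real.sqrt 2 * |Real.sinh (Real.sqrt 2 * q.2)| <
        2 * Real.cosh (Real.sqrt 2 * q.1) - Real.sqrt 2 * Real.sinh (Real.sqrt 2 * q.1) := hq
    have habs : |BB q.2| < -(AA q.1) := by
      unfold AA BB
      rw [abs_mul, abs_of_nonneg (Real.sqrt_nonneg 2)]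
      linarith
    obtain ⟨h2, h3⟩ := abs_lt.mp habs
    constructor <;> linarith
  have hwF : ∀ q ∈ W, w q = Real.log (AA q.1 + BB q.2) - Real.log (AA q.1 - BB q.2) := by
    intro q hq
    obtain ⟨hs, hd⟩ := hmem q hq
    have hA0 : AA q.1 < 0 := by linarith
    have hA : AA q.1 ≠ 0 := ne_of_lt hA0
    rw [hw q, artanh]
    have harg : Real.sqrt 2 * Real.sinh (Real.sqrt 2 * q.2) /
        (Real.sqrt 2 * Real.sinh (Real.sqrt 2 * q.1) - 2 * Real.cosh (Real.sqrt 2 * q.1))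
        = BB q.2 / AA q.1 := rfl
    rw [harg]
    have hr : (1 + BB q.2 / AA q.1) / (1 - BB q.2 / AA q.1)
        = (AA q.1 + BB q.2) / (AA q.1 - BB q.2) := by
      field_simp
      try ring
    rw [hr, Real.log_div (ne_of_lt hs) (ne_of_lt hd)]
    try ring
  have hpdx : ∀ q ∈ W, pdx w q =
      AA1 q.1 * ((AA q.1 + BB q.2)⁻¹ - (AA q.1 - BB q.2)⁻¹) := by
    intro q hq
    obtain ⟨hs, hd⟩ := hmem q hq
    have hev : w =ᶠ[nhds q]
        (fun r : ℝ × ℝ => Real.log (AA r.1 + BB r.2) - Real.log (AA r.1 - BB r.2)) :=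
      Filter.eventually_of_mem (hWo.mem_nhds hq) (fun r hr => hwF r hr)
    unfold pdx
    rw [hev.fderiv_eq]
    exact pdxF q (ne_of_lt hs) (ne_of_lt hd)
  have hpdy : ∀ q ∈ W, pdy w q =
      BB1 q.2 * ((AA q.1 + BB q.2)⁻¹ + (AA q.1 - BB q.2)⁻¹) := by
    intro q hq
    obtain ⟨hs, hd⟩ := hmem q hq
    have hev : w =ᶠ[nhds q]
        (fun r : ℝ × ℝ => Real.log (AA r.1 + BB r.2) - Real.log (AA r.1 - BB r.2)) :=
      Filter.eventually_of_mem (hWo.mem_nhds hq) (fun r hr => hwF r hr)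
    unfold pdy
    rw [hev.fderiv_eq]
    exact pdyF q (ne_of_lt hs) (ne_of_lt hd)
  intro p hp
  obtain ⟨hs, hd⟩ := hmem p hp
  have h2x : pdx (pdx w) p =
      2 * AA p.1 * ((AA p.1 + BB p.2)⁻¹ - (AA p.1 - BB p.2)⁻¹)
      + AA1 p.1 * AA1 p.1 * (((AA p.1 - BB p.2)^2)⁻¹ - ((AA p.1 + BB p.2)^2)⁻¹) := by
    have hev : pdx w =ᶠ[nhds p]
        (fun q : ℝ × ℝ => AA1 q.1 * ((AA q.1 + BB q.2)⁻¹ - (AA q.1 - BB q.2)⁻¹)) :=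
      Filter.eventually_of_mem (hWo.mem_nhds hp) (fun r hr => hpdx r hr)
    have e0 : pdx (pdx w) p = fderiv ℝ (pdx w) p (1, 0) := rfl
    rw [e0, hev.fderiv_eq]
    exact pdxG p (ne_of_lt hs) (ne_of_lt hd)
  have h2y : pdy (pdy w) p =
      2 * BB p.2 * ((AA p.1 + BB p.2)⁻¹ + (AA p.1 - BB p.2)⁻¹)
      + BB1 p.2 * BB1 p.2 * (((AA p.1 - BB p.2)^2)⁻¹ - ((AA p.1 + BB p.2)^2)⁻¹) := by
    have hev : pdy w =ᶠ[nhds p]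
        (fun q : ℝ × ℝ => BB1 q.2 * ((AA q.1 + BB q.2)⁻¹ + (AA q.1 - BB q.2)⁻¹)) :=
      Filter.eventually_of_mem (hWo.mem_nhds hp) (fun r hr => hpdy r hr)
    have e0 : pdy (pdy w) p = fderiv ℝ (pdy w) p (0, 1) := rfl
    rw [e0, hev.fderiv_eq]
    exact pdyH p (ne_of_lt hs) (ne_of_lt hd)
  have hwp : w p = Real.log ((AA p.1 + BB p.2) / (AA p.1 - BB p.2)) := by
    rw [hwF p hp, Real.log_div (ne_of_lt hs) (ne_of_lt hd)]
  have hrpos : 0 < (AA p.1 + BB p.2) / (AA p.1 - BB p.2) := div_pos_of_neg_of_neg hs hd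
  have hexp : Real.exp (2 * w p) = ((AA p.1 + BB p.2) / (AA p.1 - BB p.2))^2 := by
    rw [hwp, two_mul, Real.exp_add, Real.exp_log hrpos]
    ring
  have hsinh : Real.sinh (2 * w p) =
      (((AA p.1 + BB p.2) / (AA p.1 - BB p.2))^2
        - (((AA p.1 + BB p.2) / (AA p.1 - BB p.2))^2)⁻¹) / 2 := by
    rw [Real.sinh_eq, hexp, Real.exp_neg, hexp]
  show pdx (pdx w) p + pdy (pdy w) p = 2 * Real.sinh (2 * w p)
  rw [h2x, h2y, hsinh]
  exact key (AA p.1) (BB p.2) (AA1 p.1) (BB1 p.2) (idAA p.1) (idBB p.2)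
    (ne_of_lt hs) (ne_of_lt hd)
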